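/- arXiv:2312.01929 — 2 statements merged into one kernel-verified Lean document; each statement's English description precedes it below -/
import Mathlib

section
/- Let T > 0, a < b, let ū_b, φ' : [0,T] → ℝ be continuous, and let u, u', u* : [0,T] × [a,b] → ℝ be C² functions such that: ∂ₜu' = ∂ₓ²u' and −∂ₜu* − ∂ₓ²u* = 0 on (0,T) × (a,b); u'(0,x) = 0 and u*(T,x) = 0 for x ∈ [a,b]; ∂ₓu'(t,a) = φ'(t), ∂ₓu'(t,b) = 0, ∂ₓu*(t,a) = 0 and ∂ₓu*(t,b) = u(t,b) − ū_b(t) for t ∈ [0,T]. Then ∫₀ᵀ (u(t,b) − ū_b(t)) u'(t,b) dt = − ∫₀ᵀ u*(t,a) φ'(t) dt. -/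
open MeasureTheory

namespace Stmt4Aux
open Function

noncomputable def pdx (f : ℝ → ℝ → ℝ) (t x : ℝ) : ℝ :=
  fderiv ℝ (Function.uncurry f) (t, x) (0, 1)

noncomputable def pdt (f : ℝ → ℝ → ℝ) (t x : ℝ) : ℝ :=
  fderiv ℝ (Function.uncurry f) (t, x) (1, 0)

lemma hasDerivAt_slice_x {f : ℝ → ℝ → ℝ} (hf : ContDiff ℝ 1 (Function.uncurry f))
    (t x : ℝ) : HasDerivAt (f t) (pdx f t x) x := by
  have h1 : HasFDerivAt (Function.uncurry f) (fderiv ℝ (Function.uncurry f) (t, x)) (t, x) :=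
    (hf.differentiable one_ne_zero (t, x)).hasFDerivAt
  have h2 : HasDerivAt (fun y : ℝ => ((t, y) : ℝ × ℝ)) ((0 : ℝ), (1 : ℝ)) x :=
    (hasDerivAt_const x t).prodMk (hasDerivAt_id x)
  exact h1.comp_hasDerivAt x h2

lemma hasDerivAt_slice_t {f : ℝ → ℝ → ℝ} (hf : ContDiff ℝ 1 (Function.uncurry f))
    (t x : ℝ) : HasDerivAt (fun s => f s x) (pdt f t x) t := by
  have h1 : HasFDerivAt (Function.uncurry f) (fderiv ℝ (Function.uncurry f) (t, x)) (t, x) :=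
    (hf.differentiable one_ne_zero (t, x)).hasFDerivAt
  have h2 : HasDerivAt (fun s : ℝ => ((s, x) : ℝ × ℝ)) ((1 : ℝ), (0 : ℝ)) t :=
    (hasDerivAt_id t).prodMk (hasDerivAt_const t x)
  exact h1.comp_hasDerivAt t h2

lemma deriv_slice_x {f : ℝ → ℝ → ℝ} (hf : ContDiff ℝ 1 (Function.uncurry f))
    (t x : ℝ) : deriv (f t) x = pdx f t x := (hasDerivAt_slice_x hf t x).deriv

lemma deriv_slice_t {f : ℝ → ℝ → ℝ} (hf : ContDiff ℝ 1 (Function.uncurry f))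
    (t x : ℝ) : deriv (fun s => f s x) t = pdt f t x := (hasDerivAt_slice_t hf t x).deriv

lemma cont_pdx {f : ℝ → ℝ → ℝ} (hf : ContDiff ℝ 1 (Function.uncurry f)) :
    Continuous (Function.uncurry (pdx f)) :=
  (hf.continuous_fderiv one_ne_zero).clm_apply continuous_const

lemma cont_pdt {f : ℝ → ℝ → ℝ} (hf : ContDiff ℝ 1 (Function.uncurry f)) :
    Continuous (Function.uncurry (pdt f)) :=
  (hf.continuous_fderiv one_ne_zero).clm_apply continuous_const

lemma contDiff_pdx {f : ℝ → ℝ → ℝ} (hf : ContDiff ℝ 2 (Function.uncurry f)) :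
    ContDiff ℝ 1 (Function.uncurry (pdx f)) :=
  (hf.fderiv_right (m := 1) (by norm_num)).clm_apply contDiff_const

lemma swap_cont {f : ℝ → ℝ → ℝ} (hf : Continuous (Function.uncurry f))
    (T a b : ℝ) (hT : 0 ≤ T) (hab : a ≤ b) :
    ∫ t in (0:ℝ)..T, ∫ x in a..b, f t x = ∫ x in a..b, ∫ t in (0:ℝ)..T, f t x := by
  have key : ∫ t in Set.Ioc (0:ℝ) T, ∫ x in Set.Ioc a b, f t x
      = ∫ x in Set.Ioc a b, ∫ t in Set.Ioc (0:ℝ) T, f t x := by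
    have hint : Integrable (Function.uncurry f)
        ((volume.restrict (Set.Ioc (0:ℝ) T)).prod (volume.restrict (Set.Ioc a b))) := by
      rw [Measure.prod_restrict]
      have hcpt : IsCompact ((Set.Icc (0:ℝ) T) ×ˢ (Set.Icc a b)) :=
        isCompact_Icc.prod isCompact_Icc
      have : IntegrableOn (Function.uncurry f) ((Set.Icc (0:ℝ) T) ×ˢ (Set.Icc a b)) :=
        hf.continuousOn.integrableOn_compact hcpt
      exact this.mono_set (Set.prod_mono Set.Ioc_subset_Icc_self Set.Ioc_subset_Icc_self)
    exact MeasureTheory.integral_integral_swap hint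
  rw [intervalIntegral.integral_of_le hT, intervalIntegral.integral_of_le hab]
  simp_rw [intervalIntegral.integral_of_le hab, intervalIntegral.integral_of_le hT]
  exact key

end Stmt4Aux

open Stmt4Aux Function in
/-- Adjoint-based expression for the Gâteaux differential of the boundary-tracking objective:
if `u'` solves the perturbation (linearized heat) system with boundary flux `φ'` at `x = a`
and `u*` solves the adjoint (backward heat) system with Neumann data `u(·,b) − ū_b` at
`x = b`, then `∫₀ᵀ (u(t,b) − ū_b(t)) u'(t,b) dt = −∫₀ᵀ u*(t,a) φ'(t) dt`, identifying the L²
gradient of the objective as `−u*(·,a)`. -/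
theorem stmt4 (T a b : ℝ) (hT : 0 < T) (hab : a < b)
    (ub φ' : ℝ → ℝ) (hub : Continuous ub) (hφ' : Continuous φ')
    (u u' ustar : ℝ → ℝ → ℝ)
    (hu : ContDiff ℝ 2 (Function.uncurry u))
    (hu' : ContDiff ℝ 2 (Function.uncurry u'))
    (hustar : ContDiff ℝ 2 (Function.uncurry ustar))
    (hpde : ∀ t ∈ Set.Ioo (0:ℝ) T, ∀ x ∈ Set.Ioo a b,
      deriv (fun s => u' s x) t = deriv (deriv (u' t)) x)
    (hadj : ∀ t ∈ Set.Ioo (0:ℝ) T, ∀ x ∈ Set.Ioo a b,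
      -(deriv (fun s => ustar s x) t) - deriv (deriv (ustar t)) x = 0)
    (hic : ∀ x ∈ Set.Icc a b, u' 0 x = 0)
    (htc : ∀ x ∈ Set.Icc a b, ustar T x = 0)
    (hbc1 : ∀ t ∈ Set.Icc (0:ℝ) T, deriv (u' t) a = φ' t)
    (hbc2 : ∀ t ∈ Set.Icc (0:ℝ) T, deriv (u' t) b = 0)
    (hbc3 : ∀ t ∈ Set.Icc (0:ℝ) T, deriv (ustar t) a = 0)
    (hbc4 : ∀ t ∈ Set.Icc (0:ℝ) T, deriv (ustar t) b = u t b - ub t) :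
    ∫ t in (0:ℝ)..T, (u t b - ub t) * u' t b
      = -∫ t in (0:ℝ)..T, ustar t a * φ' t := by
  have hu'1 : ContDiff ℝ 1 (Function.uncurry u') := hu'.of_le one_le_two
  have hus1 : ContDiff ℝ 1 (Function.uncurry ustar) := hustar.of_le one_le_two
  -- continuity of everything
  have cu' : Continuous (Function.uncurry u') := hu'.continuous
  have cus : Continuous (Function.uncurry ustar) := hustar.continuous
  have cpdtu' := cont_pdt hu'1
  have cpdtus := cont_pdt hus1
  have cpdxu' := cont_pdx hu'1
  have cpdxus := cont_pdx hus1
  have cpdxxu' := cont_pdx (contDiff_pdx hu')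
  have cpdxxus := cont_pdx (contDiff_pdx hustar)
  set dPt : ℝ → ℝ → ℝ := fun t x => pdt ustar t x * u' t x + ustar t x * pdt u' t x with hdPt
  set Qf : ℝ → ℝ → ℝ := fun t x => ustar t x * pdx u' t x - pdx ustar t x * u' t x with hQf
  set dQx : ℝ → ℝ → ℝ := fun t x =>
    ustar t x * pdx (pdx u') t x - pdx (pdx ustar) t x * u' t x with hdQx
  have cdPt : Continuous (Function.uncurry dPt) :=
    (cpdtus.mul cu').add (cus.mul cpdtu')
  -- Step A : t-FTC
  have stepA : ∀ x ∈ Set.Icc a b, (∫ t in (0:ℝ)..T, dPt t x) = 0 := by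
    intro x hx
    have hd : ∀ t ∈ Set.uIcc (0:ℝ) T, HasDerivAt (fun s => ustar s x * u' s x) (dPt t x) t :=
      fun t _ => (hasDerivAt_slice_t hus1 t x).mul (hasDerivAt_slice_t hu'1 t x)
    have hint : IntervalIntegrable (fun t => dPt t x) volume 0 T :=
      (cdPt.comp (continuous_id.prodMk continuous_const)).intervalIntegrable 0 T
    rw [intervalIntegral.integral_eq_sub_of_hasDerivAt hd hint, htc x hx, hic x hx]
    ring
  -- Step B : x-FTC
  have stepB : ∀ t : ℝ, (∫ x in a..b, dQx t x) = Qf t b - Qf t a := by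
    intro t
    have hd : ∀ x ∈ Set.uIcc a b, HasDerivAt (fun x => Qf t x) (dQx t x) x := by
      intro x _
      have h1 := hasDerivAt_slice_x hus1 t x
      have h2 := hasDerivAt_slice_x (contDiff_pdx hu') t x
      have h3 := hasDerivAt_slice_x (contDiff_pdx hustar) t x
      have h4 := hasDerivAt_slice_x hu'1 t x
      have := (h1.mul h2).sub (h3.mul h4)
      convert this using 1
      · rfl
      · rfl
      show ustar t x * pdx (pdx u') t x - pdx (pdx ustar) t x * u' t x = _
      ring
      rfl
    have cdQx : Continuous (fun x => dQx t x) := by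
      have c1 : Continuous (fun x => ustar t x) :=
        cus.comp (continuous_const.prodMk continuous_id)
      have c2 : Continuous (fun x => pdx (pdx u') t x) :=
        cpdxxu'.comp (continuous_const.prodMk continuous_id)
      have c3 : Continuous (fun x => pdx (pdx ustar) t x) :=
        cpdxxus.comp (continuous_const.prodMk continuous_id)
      have c4 : Continuous (fun x => u' t x) :=
        cu'.comp (continuous_const.prodMk continuous_id)
      exact (c1.mul c2).sub (c3.mul c4)
    rw [intervalIntegral.integral_eq_sub_of_hasDerivAt hd (cdQx.intervalIntegrable a b)]
  -- the swap
  have hswap := swap_cont cdPt T a b hT.le hab.le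
  -- RHS of swap is zero
  have hrhs : (∫ x in a..b, ∫ t in (0:ℝ)..T, dPt t x) = 0 := by
    rw [intervalIntegral.integral_congr (g := fun _ => (0:ℝ))
      (fun x hx => stepA x (by rwa [Set.uIcc_of_le hab.le] at hx))]
    simp
  -- inner integral equals boundary terms for t ∈ Ioo 0 T
  have hinner : ∀ t ∈ Set.Ioo (0:ℝ) T,
      (∫ x in a..b, dPt t x) = -((u t b - ub t) * u' t b) - ustar t a * φ' t := by
    intro t ht
    have htIcc : t ∈ Set.Icc (0:ℝ) T := Set.mem_Icc_of_Ioo ht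
    have heq : (∫ x in a..b, dPt t x) = ∫ x in a..b, dQx t x := by
      apply intervalIntegral.integral_congr_ae
      have hb : ∀ᵐ x : ℝ, x ≠ b := by
        rw [ae_iff]
        simpa using Real.volume_singleton (x := b)
      filter_upwards [hb] with x hxb hxI
      rw [Set.uIoc_of_le hab.le] at hxI
      have hxo : x ∈ Set.Ioo a b := ⟨hxI.1, lt_of_le_of_ne hxI.2 hxb⟩
      -- use PDEs
      have e1 : pdt u' t x = pdx (pdx u') t x := by
        have h := hpde t ht x hxo
        rw [deriv_slice_t hu'1] at h
        have hder : deriv (u' t) = pdx u' t := funext (deriv_slice_x hu'1 t)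
        rw [hder, deriv_slice_x (contDiff_pdx hu')] at h
        exact h
      have e2 : pdt ustar t x = -(pdx (pdx ustar) t x) := by
        have h := hadj t ht x hxo
        rw [deriv_slice_t hus1] at h
        have hder : deriv (ustar t) = pdx ustar t := funext (deriv_slice_x hus1 t)
        rw [hder, deriv_slice_x (contDiff_pdx hustar)] at h
        linarith
      simp only [hdPt, hdQx, e1, e2]
      ring
    rw [heq, stepB t]
    have eb1 : pdx u' t b = 0 := by rw [← deriv_slice_x hu'1]; exact hbc2 t htIcc
    have eb2 : pdx ustar t b = u t b - ub t := by rw [← deriv_slice_x hus1]; exact hbc4 t htIcc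
    have ea1 : pdx u' t a = φ' t := by rw [← deriv_slice_x hu'1]; exact hbc1 t htIcc
    have ea2 : pdx ustar t a = 0 := by rw [← deriv_slice_x hus1]; exact hbc3 t htIcc
    simp only [hQf, eb1, eb2, ea1, ea2]
    ring
  -- combine
  have h0 : (∫ t in (0:ℝ)..T, ∫ x in a..b, dPt t x)
      = ∫ t in (0:ℝ)..T, (-((u t b - ub t) * u' t b) - ustar t a * φ' t) := by
    apply intervalIntegral.integral_congr_ae
    have hb : ∀ᵐ t : ℝ, t ≠ T := by
      rw [ae_iff]
      simpa using Real.volume_singleton (x := T)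
    filter_upwards [hb] with t htb htI
    rw [Set.uIoc_of_le hT.le] at htI
    exact hinner t ⟨htI.1, lt_of_le_of_ne htI.2 htb⟩
  have hmain : (∫ t in (0:ℝ)..T,
      (-((u t b - ub t) * u' t b) - ustar t a * φ' t)) = 0 := by
    rw [← h0, hswap, hrhs]
  -- split the integral
  have c1 : Continuous (fun t => (u t b - ub t) * u' t b) := by
    have : Continuous (fun t => u t b) :=
      hu.continuous.comp (continuous_id.prodMk continuous_const)
    exact (this.sub hub).mul (cu'.comp (continuous_id.prodMk continuous_const))
  have c2 : Continuous (fun t => ustar t a * φ' t) :=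
    (cus.comp (continuous_id.prodMk continuous_const)).mul hφ'
  rw [intervalIntegral.integral_sub (f := fun t => -((u t b - ub t) * u' t b)) (c1.neg.intervalIntegrable 0 T)
    (c2.intervalIntegrable 0 T), intervalIntegral.integral_neg] at hmain
  linarith [hmain]
end

section
/- Let T > 0, a < b, let φ' : [0,T] → ℝ be continuous, and let u, u', v* : [0,T] × [a,b] → ℝ be C² functions such that: ∂ₜu' = ∂ₓ²u' on (0,T) × (a,b) with ∂ₓu'(t,a) = φ'(t), ∂ₓu'(t,b) = 0, and u'(0,·) = 0; and −∂ₜv* − ∂ₓ²v* = u on (0,T) × (a,b) with ∂ₓv*(t,a) = 0, ∂ₓv*(t,b) = 0, and v*(T,·) = 0. Then ∫₀ᵀ ∫ₐᵇ u(t,x) u'(t,x) dx dt = − ∫₀ᵀ v*(t,a) φ'(t) dt. -/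
open MeasureTheory Function

noncomputable def pT (f : ℝ → ℝ → ℝ) (t x : ℝ) : ℝ := fderiv ℝ (uncurry f) (t, x) (1, 0)
noncomputable def pX (f : ℝ → ℝ → ℝ) (t x : ℝ) : ℝ := fderiv ℝ (uncurry f) (t, x) (0, 1)

lemma hasDerivAt_pT {f : ℝ → ℝ → ℝ} (hf : Differentiable ℝ (uncurry f)) (t x : ℝ) :
    HasDerivAt (fun s => f s x) (pT f t x) t := by
  have h1 : HasDerivAt (fun s : ℝ => (s, x)) ((1:ℝ), (0:ℝ)) t :=
    HasDerivAt.prodMk (hasDerivAt_id t) (hasDerivAt_const t x)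
  exact (hf (t, x)).hasFDerivAt.comp_hasDerivAt t h1

lemma hasDerivAt_pX {f : ℝ → ℝ → ℝ} (hf : Differentiable ℝ (uncurry f)) (t x : ℝ) :
    HasDerivAt (f t) (pX f t x) x := by
  have h1 : HasDerivAt (fun y : ℝ => (t, y)) ((0:ℝ), (1:ℝ)) x :=
    HasDerivAt.prodMk (hasDerivAt_const x t) (hasDerivAt_id x)
  exact (hf (t, x)).hasFDerivAt.comp_hasDerivAt x h1

lemma contDiff_pX {f : ℝ → ℝ → ℝ} (hf : ContDiff ℝ 2 (uncurry f)) :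
    ContDiff ℝ 1 (uncurry (pX f)) :=
  (hf.fderiv_right (m := 1) (by norm_num)).clm_apply contDiff_const

lemma continuous_pT {f : ℝ → ℝ → ℝ} (hf : ContDiff ℝ 1 (uncurry f)) :
    Continuous (uncurry (pT f)) :=
  ((hf.fderiv_right (m := 0) (by norm_num)).clm_apply contDiff_const).continuous

lemma continuous_pX {f : ℝ → ℝ → ℝ} (hf : ContDiff ℝ 1 (uncurry f)) :
    Continuous (uncurry (pX f)) :=
  ((hf.fderiv_right (m := 0) (by norm_num)).clm_apply contDiff_const).continuous

lemma deriv_eq_pX {f : ℝ → ℝ → ℝ} (hf : Differentiable ℝ (uncurry f)) (t : ℝ) :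
    deriv (f t) = pX f t := funext fun x => (hasDerivAt_pX hf t x).deriv

lemma deriv2_eq_pXX {f : ℝ → ℝ → ℝ} (hf : ContDiff ℝ 2 (uncurry f)) (t x : ℝ) :
    deriv (deriv (f t)) x = pX (pX f) t x := by
  rw [deriv_eq_pX (hf.differentiable (by norm_num)) t]
  exact (hasDerivAt_pX ((contDiff_pX hf).differentiable one_ne_zero) t x).deriv

lemma deriv_eq_pT {f : ℝ → ℝ → ℝ} (hf : Differentiable ℝ (uncurry f)) (t x : ℝ) :
    deriv (fun s => f s x) t = pT f t x := (hasDerivAt_pT hf t x).deriv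

lemma ae_ne_real (c : ℝ) : ∀ᵐ x : ℝ, x ≠ c := by
  have h : {x : ℝ | ¬ x ≠ c} = {c} := by ext y; simp
  rw [ae_iff, h]; exact measure_singleton c

lemma swap_int {a₁ b₁ a₂ b₂ : ℝ} (h₁ : a₁ ≤ b₁) (h₂ : a₂ ≤ b₂)
    (g : ℝ → ℝ → ℝ) (hg : Continuous (uncurry g)) :
    ∫ t in a₁..b₁, ∫ x in a₂..b₂, g t x = ∫ x in a₂..b₂, ∫ t in a₁..b₁, g t x := by
  rw [intervalIntegral.integral_of_le h₁, intervalIntegral.integral_of_le h₂]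
  simp_rw [intervalIntegral.integral_of_le h₂, intervalIntegral.integral_of_le h₁]
  apply MeasureTheory.integral_integral_swap
  rw [Measure.prod_restrict, ← Measure.volume_eq_prod]
  exact (hg.continuousOn.integrableOn_compact (isCompact_Icc.prod isCompact_Icc)).mono_set
    (Set.prod_mono Set.Ioc_subset_Icc_self Set.Ioc_subset_Icc_self)

/-- Adjoint-based expression for the Gâteaux differential of the energy constraint:
if `u'` solves the perturbation (linearized heat) system with boundary flux `φ'` at `x = a`
and `v*` solves the backward heat equation forced by the state `u` with homogeneous Neumann
boundary conditions and zero terminal condition, then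
`∫₀ᵀ∫ₐᵇ u u' dx dt = −∫₀ᵀ v*(t,a) φ'(t) dt`, identifying the L² representation of the
normal element as `−v*(·,a)` (up to the factor `1/T`). -/
theorem stmt5 (T a b : ℝ) (hT : 0 < T) (hab : a < b)
    (φ' : ℝ → ℝ) (hφ' : Continuous φ')
    (u u' vstar : ℝ → ℝ → ℝ)
    (hu : ContDiff ℝ 2 (Function.uncurry u))
    (hu' : ContDiff ℝ 2 (Function.uncurry u'))
    (hvstar : ContDiff ℝ 2 (Function.uncurry vstar))
    (hpde : ∀ t ∈ Set.Ioo (0:ℝ) T, ∀ x ∈ Set.Ioo a b,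
      deriv (fun s => u' s x) t = deriv (deriv (u' t)) x)
    (hbc1 : ∀ t ∈ Set.Icc (0:ℝ) T, deriv (u' t) a = φ' t)
    (hbc2 : ∀ t ∈ Set.Icc (0:ℝ) T, deriv (u' t) b = 0)
    (hic : ∀ x ∈ Set.Icc a b, u' 0 x = 0)
    (hadj : ∀ t ∈ Set.Ioo (0:ℝ) T, ∀ x ∈ Set.Ioo a b,
      -(deriv (fun s => vstar s x) t) - deriv (deriv (vstar t)) x = u t x)
    (hbc3 : ∀ t ∈ Set.Icc (0:ℝ) T, deriv (vstar t) a = 0)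
    (hbc4 : ∀ t ∈ Set.Icc (0:ℝ) T, deriv (vstar t) b = 0)
    (htc : ∀ x ∈ Set.Icc a b, vstar T x = 0) :
    ∫ t in (0:ℝ)..T, ∫ x in a..b, u t x * u' t x
      = -∫ t in (0:ℝ)..T, vstar t a * φ' t := by
  have hu'd : Differentiable ℝ (uncurry u') := hu'.differentiable (by norm_num)
  have hvd : Differentiable ℝ (uncurry vstar) := hvstar.differentiable (by norm_num)
  have hpxu'd : Differentiable ℝ (uncurry (pX u')) := (contDiff_pX hu').differentiable one_ne_zero
  have hpxvd : Differentiable ℝ (uncurry (pX vstar)) := (contDiff_pX hvstar).differentiable one_ne_zero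
  have cu' : Continuous (uncurry u') := hu'.continuous
  have cv : Continuous (uncurry vstar) := hvstar.continuous
  have cptv : Continuous (uncurry (pT vstar)) := continuous_pT (hvstar.of_le (by norm_num))
  have cptu' : Continuous (uncurry (pT u')) := continuous_pT (hu'.of_le (by norm_num))
  have cpxv : Continuous (uncurry (pX vstar)) := (contDiff_pX hvstar).continuous
  have cpxu' : Continuous (uncurry (pX u')) := (contDiff_pX hu').continuous
  have cpxxv : Continuous (uncurry (pX (pX vstar))) := continuous_pX (contDiff_pX hvstar)
  have cpxxu' : Continuous (uncurry (pX (pX u'))) := continuous_pX (contDiff_pX hu')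
  have sliceT : ∀ (g : ℝ → ℝ → ℝ), Continuous (uncurry g) → ∀ t, Continuous (g t) :=
    fun g hg t => hg.comp (Continuous.prodMk_right t)
  have sliceX : ∀ (g : ℝ → ℝ → ℝ), Continuous (uncurry g) → ∀ x, Continuous (fun t => g t x) :=
    fun g hg x => hg.comp (Continuous.prodMk_left x)
  set P : ℝ → ℝ := fun t => ∫ x in a..b, pT vstar t x * u' t x with hP
  set Q : ℝ → ℝ := fun t => ∫ x in a..b, u' t x * pX (pX vstar) t x with hQ
  set R : ℝ → ℝ := fun t => ∫ x in a..b, vstar t x * pX (pX u') t x with hR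
  -- Step 1: replace u by the adjoint equation
  have step1 : (∫ t in (0:ℝ)..T, ∫ x in a..b, u t x * u' t x)
      = ∫ t in (0:ℝ)..T, (-(P t) - Q t) := by
    apply intervalIntegral.integral_congr_ae
    filter_upwards [ae_ne_real T] with t htT ht
    rw [Set.uIoc_of_le hT.le] at ht
    have htO : t ∈ Set.Ioo 0 T := ⟨ht.1, lt_of_le_of_ne ht.2 htT⟩
    have inner : (∫ x in a..b, u t x * u' t x)
        = ∫ x in a..b, (-(pT vstar t x * u' t x) - u' t x * pX (pX vstar) t x) := by
      apply intervalIntegral.integral_congr_ae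
      filter_upwards [ae_ne_real b] with x hxb hx
      rw [Set.uIoc_of_le hab.le] at hx
      have hxO : x ∈ Set.Ioo a b := ⟨hx.1, lt_of_le_of_ne hx.2 hxb⟩
      have h := hadj t htO x hxO
      rw [deriv_eq_pT hvd t x, deriv2_eq_pXX hvstar t x] at h
      rw [← h]; ring
    rw [inner]
    have h1 : IntervalIntegrable (fun x => -(pT vstar t x * u' t x)) volume a b :=
      (((sliceT _ cptv t).mul (sliceT _ cu' t)).neg).intervalIntegrable a b
    have h2 : IntervalIntegrable (fun x => u' t x * pX (pX vstar) t x) volume a b :=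
      ((sliceT _ cu' t).mul (sliceT _ cpxxv t)).intervalIntegrable a b
    rw [intervalIntegral.integral_sub h1 h2, intervalIntegral.integral_neg]
  -- continuity of the parametric integrals
  have cP : Continuous P :=
    intervalIntegral.continuous_parametric_intervalIntegral_of_continuous'
      (f := fun t x => pT vstar t x * u' t x) (by exact cptv.mul cu') a b
  have cQ : Continuous Q :=
    intervalIntegral.continuous_parametric_intervalIntegral_of_continuous'
      (f := fun t x => u' t x * pX (pX vstar) t x) (by exact cu'.mul cpxxv) a b
  have cR : Continuous R :=
    intervalIntegral.continuous_parametric_intervalIntegral_of_continuous'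
      (f := fun t x => vstar t x * pX (pX u') t x) (by exact cv.mul cpxxu') a b
  -- Step Q: integration by parts twice in x
  have stepQ : ∀ t ∈ Set.Icc (0:ℝ) T, Q t = vstar t a * φ' t + R t := by
    intro t ht
    have pxva : pX vstar t a = 0 := by
      rw [← deriv_eq_pX hvd t]; exact hbc3 t ht
    have pxvb : pX vstar t b = 0 := by
      rw [← deriv_eq_pX hvd t]; exact hbc4 t ht
    have pxu'a : pX u' t a = φ' t := by
      rw [← deriv_eq_pX hu'd t]; exact hbc1 t ht
    have pxu'b : pX u' t b = 0 := by
      rw [← deriv_eq_pX hu'd t]; exact hbc2 t ht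
    have ibp1 : Q t = u' t b * pX vstar t b - u' t a * pX vstar t a
        - ∫ x in a..b, pX u' t x * pX vstar t x :=
      intervalIntegral.integral_mul_deriv_eq_deriv_mul
        (fun x _ => hasDerivAt_pX hu'd t x) (fun x _ => hasDerivAt_pX hpxvd t x)
        ((sliceT _ cpxu' t).intervalIntegrable a b)
        ((sliceT _ cpxxv t).intervalIntegrable a b)
    have ibp2 : R t = vstar t b * pX u' t b - vstar t a * pX u' t a
        - ∫ x in a..b, pX vstar t x * pX u' t x :=
      intervalIntegral.integral_mul_deriv_eq_deriv_mul
        (fun x _ => hasDerivAt_pX hvd t x) (fun x _ => hasDerivAt_pX hpxu'd t x)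
        ((sliceT _ cpxv t).intervalIntegrable a b)
        ((sliceT _ cpxxu' t).intervalIntegrable a b)
    have comm : (∫ x in a..b, pX u' t x * pX vstar t x)
        = ∫ x in a..b, pX vstar t x * pX u' t x := by
      simp_rw [mul_comm]
    rw [pxva, pxvb] at ibp1
    rw [pxu'a, pxu'b] at ibp2
    rw [ibp1, comm]
    linarith [ibp2]
  -- Step P: Fubini, integration by parts in t, the PDE for u', Fubini back
  have stepP : ∫ t in (0:ℝ)..T, P t = -∫ t in (0:ℝ)..T, R t := by
    have fub1 : ∫ t in (0:ℝ)..T, P t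
        = ∫ x in a..b, ∫ t in (0:ℝ)..T, pT vstar t x * u' t x :=
      swap_int hT.le hab.le _ (by exact cptv.mul cu')
    have ibp : ∀ x ∈ Set.Icc a b,
        (∫ t in (0:ℝ)..T, pT vstar t x * u' t x)
          = -∫ t in (0:ℝ)..T, vstar t x * pT u' t x := by
      intro x hx
      have h := intervalIntegral.integral_mul_deriv_eq_deriv_mul
        (u := fun t => u' t x) (u' := fun t => pT u' t x)
        (v := fun t => vstar t x) (v' := fun t => pT vstar t x)
        (fun t _ => hasDerivAt_pT hu'd t x) (fun t _ => hasDerivAt_pT hvd t x)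
        ((sliceX _ cptu' x).intervalIntegrable 0 T)
        ((sliceX _ cptv x).intervalIntegrable 0 T)
      beta_reduce at h
      rw [htc x hx, hic x hx] at h
      have comm1 : (∫ t in (0:ℝ)..T, pT vstar t x * u' t x)
          = ∫ t in (0:ℝ)..T, u' t x * pT vstar t x := by simp_rw [mul_comm]
      have comm2 : (∫ t in (0:ℝ)..T, pT u' t x * vstar t x)
          = ∫ t in (0:ℝ)..T, vstar t x * pT u' t x := by simp_rw [mul_comm]
      rw [comm1, h, comm2]; ring
    have eq1 : (∫ x in a..b, ∫ t in (0:ℝ)..T, pT vstar t x * u' t x)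
        = ∫ x in a..b, (-(∫ t in (0:ℝ)..T, vstar t x * pT u' t x)) := by
      apply intervalIntegral.integral_congr
      intro x hx
      rw [Set.uIcc_of_le hab.le] at hx
      exact ibp x hx
    have eq2 : (∫ x in a..b, ∫ t in (0:ℝ)..T, vstar t x * pT u' t x)
        = ∫ x in a..b, ∫ t in (0:ℝ)..T, vstar t x * pX (pX u') t x := by
      apply intervalIntegral.integral_congr_ae
      filter_upwards [ae_ne_real b] with x hxb hx
      rw [Set.uIoc_of_le hab.le] at hx
      have hxO : x ∈ Set.Ioo a b := ⟨hx.1, lt_of_le_of_ne hx.2 hxb⟩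
      apply intervalIntegral.integral_congr_ae
      filter_upwards [ae_ne_real T] with t htT ht
      rw [Set.uIoc_of_le hT.le] at ht
      have htO : t ∈ Set.Ioo 0 T := ⟨ht.1, lt_of_le_of_ne ht.2 htT⟩
      have h := hpde t htO x hxO
      rw [deriv_eq_pT hu'd t x, deriv2_eq_pXX hu' t x] at h
      rw [h]
    have fub2 : (∫ x in a..b, ∫ t in (0:ℝ)..T, vstar t x * pX (pX u') t x)
        = ∫ t in (0:ℝ)..T, R t :=
      (swap_int hT.le hab.le _ (by exact cv.mul cpxxu')).symm
    rw [fub1, eq1, intervalIntegral.integral_neg, eq2, fub2]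
  -- Assemble
  have hsplit : (∫ t in (0:ℝ)..T, (-(P t) - Q t))
      = -(∫ t in (0:ℝ)..T, P t) - ∫ t in (0:ℝ)..T, Q t := by
    rw [intervalIntegral.integral_sub (f := fun t => -(P t)) (g := Q) (cP.neg.intervalIntegrable 0 T)
      (cQ.intervalIntegrable 0 T), intervalIntegral.integral_neg]
  have hQint : (∫ t in (0:ℝ)..T, Q t)
      = (∫ t in (0:ℝ)..T, vstar t a * φ' t) + ∫ t in (0:ℝ)..T, R t := by
    have congrQ : (∫ t in (0:ℝ)..T, Q t)
        = ∫ t in (0:ℝ)..T, (vstar t a * φ' t + R t) := by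
      apply intervalIntegral.integral_congr
      intro t ht
      rw [Set.uIcc_of_le hT.le] at ht
      exact stepQ t ht
    rw [congrQ, intervalIntegral.integral_add (f := fun t => vstar t a * φ' t) (g := R)
      (((sliceX _ cv a).mul hφ').intervalIntegrable 0 T) (cR.intervalIntegrable 0 T)]
  rw [step1, hsplit, stepP, hQint]
  ring
end
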